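/- For every m ≥ 1, the set {x₁, x₂, x₃, α_{2m−1}} is also a boundary of the good set S_{2m} = {y₁,…,y_{2m}}. -/

import Mathlib

open scoped BigOperators

/-- Symbols: x₁,x₂,x₃,x₄ are 0,1,2,3 and αⱼ = j+3 (so all symbols are distinct naturals). -/
def α (j : ℕ) : ℕ := j + 3

/-- The points y₁, y₂, y₃, … of the paper's construction. -/
def y : ℕ → Fin 4 → ℕ := fun k =>
  if k = 1 then ![0, 1, 2, 3]
  else if k = 2 then ![0, 1, α 1, α 2]
  else match k % 4 with
    | 1 => ![0, α (k - 1), α k, α (k + 1)]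
    | 2 => ![α (k - 3), 1, α (k - 1), α k]
    | 3 => ![α k, α (k + 1), 2, α (k - 1)]
    | _ => ![α (k - 1), α k, α (k - 3), 3]

/-- u = (u₁,u₂,u₃,u₄) solves equation (1) for f on S. -/
def Solves (S : Set (Fin 4 → ℕ)) (f : (Fin 4 → ℕ) → ℂ) (u : Fin 4 → ℕ → ℂ) : Prop :=
  ∀ p ∈ S, f p = ∑ i, u i (p i)

/-- S is good: every complex function on S decomposes into coordinate functions. -/
def IsGood (S : Set (Fin 4 → ℕ)) : Prop := ∀ f, ∃ u, Solves S f u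

/-- i-th projection of S. -/
def proj (S : Set (Fin 4 → ℕ)) (i : Fin 4) : Set ℕ := (fun p => p i) '' S

/-- B is a boundary set of S: for every f and every prescription U on B,
equation (1) admits a solution agreeing with U on B, unique on the projections of S. -/
def IsBoundary (S : Set (Fin 4 → ℕ)) (B : Set ℕ) : Prop :=
  B ⊆ ⋃ i, proj S i ∧
  ∀ f : (Fin 4 → ℕ) → ℂ, ∀ U : ℕ → ℂ,
    (∃ u, Solves S f u ∧ ∀ i, ∀ a ∈ B ∩ proj S i, u i a = U a) ∧
    ∀ u v, Solves S f u → (∀ i, ∀ a ∈ B ∩ proj S i, u i a = U a) →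
      Solves S f v → (∀ i, ∀ a ∈ B ∩ proj S i, v i a = U a) →
      ∀ i, ∀ a ∈ proj S i, u i a = v i a

/-- S is full: a maximal good subset of the product of its projections. -/
def IsFull (S : Set (Fin 4 → ℕ)) : Prop :=
  IsGood S ∧ ∀ T : Set (Fin 4 → ℕ), S ⊆ T → (∀ p ∈ T, ∀ i, p i ∈ proj S i) →
    IsGood T → T = S

/-- Sₙ = {y₁,…,y_N}. -/
def Sn (N : ℕ) : Set (Fin 4 → ℕ) := y '' Set.Icc 1 N

/-- The infinite set S = {y₁, y₂, …}. -/
def Sinf : Set (Fin 4 → ℕ) := y '' Set.Ici 1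

/-- The extra point z = zₙ = (α_{4n−1}, x₂, α_{4n−3}, x₄). -/
def z (n : ℕ) : Fin 4 → ℕ := ![α (4 * n - 1), 1, α (4 * n - 3), 3]

/-- Two points of S are related iff some finite full subset of S contains both. -/
def Related (S : Set (Fin 4 → ℕ)) (p q : Fin 4 → ℕ) : Prop :=
  ∃ K, K ⊆ S ∧ K.Finite ∧ IsFull K ∧ p ∈ K ∧ q ∈ K

/-- The 4n×4n incidence matrix A_{4n}: rows y₂,…,y_{4n},zₙ; columns α₁,…,α_{4n}. -/
def A (n : ℕ) : Matrix (Fin (4 * n)) (Fin (4 * n)) ℚ :=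
  Matrix.of fun i j =>
    if ∃ k, (if (i : ℕ) = 4 * n - 1 then z n else y ((i : ℕ) + 2)) k = (j : ℕ) + 4
    then 1 else 0

-- AUX
lemma y_one : y 1 = ![0,1,2,3] := rfl
lemma y_two : y 2 = ![0,1,4,5] := rfl
lemma y_shape3 (n : ℕ) : y (4*n+3) = ![4*n+6, 4*n+7, 2, 4*n+5] := by
  simp only [y, show (4*n+3) % 4 = 3 by omega, if_neg (by omega : ¬ 4*n+3 = 1),
    if_neg (by omega : ¬ 4*n+3 = 2), α, show 4*n+3-1 = 4*n+2 by omega,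
    show 4*n+3+1=4*n+4 by omega]
lemma y_shape0 (n : ℕ) : y (4*n+4) = ![4*n+6, 4*n+7, 4*n+4, 3] := by
  simp only [y, show (4*n+4) % 4 = 0 by omega, if_neg (by omega : ¬ 4*n+4 = 1),
    if_neg (by omega : ¬ 4*n+4 = 2), α, show 4*n+4-1 = 4*n+3 by omega,
    show 4*n+4-3=4*n+1 by omega]
lemma y_shape1 (n : ℕ) : y (4*n+5) = ![0, 4*n+7, 4*n+8, 4*n+9] := by
  simp only [y, show (4*n+5) % 4 = 1 by omega, if_neg (by omega : ¬ 4*n+5 = 1),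
    if_neg (by omega : ¬ 4*n+5 = 2), α, show 4*n+5-1 = 4*n+4 by omega,
    show 4*n+5+1=4*n+6 by omega]
lemma y_shape2 (n : ℕ) : y (4*n+6) = ![4*n+6, 1, 4*n+8, 4*n+9] := by
  simp only [y, show (4*n+6) % 4 = 2 by omega, if_neg (by omega : ¬ 4*n+6 = 1),
    if_neg (by omega : ¬ 4*n+6 = 2), α, show 4*n+6-1 = 4*n+5 by omega,
    show 4*n+6-3=4*n+3 by omega]
lemma sum4 (u : Fin 4 → ℕ → ℂ) (p : Fin 4 → ℕ) :
    ∑ i, u i (p i) = u 0 (p 0) + u 1 (p 1) + u 2 (p 2) + u 3 (p 3) :=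
  Fin.sum_univ_four _

def Wi (j : ℕ) : Fin 4 :=
  if j % 4 = 1 then 2 else if j % 4 = 2 then 3 else if j % 4 = 3 then 0 else 1
lemma Wi1 {j : ℕ} (h : j % 4 = 1) : Wi j = 2 := by simp [Wi, h]
lemma Wi2 {j : ℕ} (h : j % 4 = 2) : Wi j = 3 := by simp [Wi, h]
lemma Wi3 {j : ℕ} (h : j % 4 = 3) : Wi j = 0 := by simp [Wi, h]
lemma Wi0 {j : ℕ} (h : j % 4 = 0) : Wi j = 1 := by simp [Wi, h]

noncomputable def C4 (f : (Fin 4 → ℕ) → ℂ) (U : ℕ → ℂ) : ℂ := f (y 1) - U 0 - U 1 - U 2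
noncomputable def gq (f : (Fin 4 → ℕ) → ℂ) (U : ℕ → ℂ) (k : ℕ) : ℂ :=
  if k = 2 then f (y 2) - U 0 - U 1
  else f (y k) - (if k % 4 = 1 then U 0 else if k % 4 = 3 then U 2
       else if k % 4 = 2 then U 1 else C4 f U)
noncomputable def dq (f : (Fin 4 → ℕ) → ℂ) (U : ℕ → ℂ) (t : ℕ) : ℂ :=
  gq f U (2*t+1) - gq f U (2*t+2)
noncomputable def eqf (f : (Fin 4 → ℕ) → ℂ) (U : ℕ → ℂ) : ℕ → ℂ
  | 0 => 0
  | 1 => (gq f U 2 + dq f U 1)/2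
  | (s+2) => (gq f U (2*s+3) - eqf f U (s+1) + dq f U (s+2))/2

lemma eqf_one (f : (Fin 4 → ℕ) → ℂ) (U : ℕ → ℂ) : eqf f U 1 = (gq f U 2 + dq f U 1)/2 := rfl
lemma eqf_succ (f : (Fin 4 → ℕ) → ℂ) (U : ℕ → ℂ) (s : ℕ) :
    eqf f U (s+2) = (gq f U (2*s+3) - eqf f U (s+1) + dq f U (s+2))/2 := rfl

noncomputable def Av (m : ℕ) (f : (Fin 4 → ℕ) → ℂ) (U : ℕ → ℂ) (j : ℕ) : ℂ :=
  if j = 2*m - 1 then U (2*m + 2)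
  else if j = 2*m then
    (if m = 1 then gq f U 2 else gq f U (2*m-1) - eqf f U (m-1)) - U (2*m+2)
  else if j % 2 = 0 then eqf f U (j/2)
  else eqf f U ((j+1)/2) - dq f U ((j+1)/2)

variable {f : (Fin 4 → ℕ) → ℂ} {U : ℕ → ℂ} {m : ℕ}

lemma Av_odd (hm : 1 ≤ m) (s : ℕ) (hs : s + 1 ≤ m - 1) :
    Av m f U (2*s+1) = eqf f U (s+1) - dq f U (s+1) := by
  unfold Av
  rw [if_neg (by omega), if_neg (by omega), if_neg (by omega),
    show (2*s+1+1)/2 = s+1 by omega]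
lemma Av_even (hm : 1 ≤ m) (s : ℕ) (hs : s + 1 ≤ m - 1) :
    Av m f U (2*s+2) = eqf f U (s+1) := by
  unfold Av
  rw [if_neg (by omega), if_neg (by omega), if_pos (by omega),
    show (2*s+2)/2 = s+1 by omega]
lemma Av_top1 : Av m f U (2*m-1) = U (2*m+2) := by
  unfold Av; rw [if_pos rfl]
lemma Av_top0 (hm : 1 ≤ m) : Av m f U (2*m) =
    (if m = 1 then gq f U 2 else gq f U (2*m-1) - eqf f U (m-1)) - U (2*m+2) := by
  unfold Av; rw [if_neg (by omega), if_pos rfl]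

lemma L2 (hm : 1 ≤ m) : Av m f U 1 + Av m f U 2 = gq f U 2 := by
  by_cases h1 : m = 1
  · subst h1
    have a1 : Av 1 f U 1 = U 4 := by
      have := Av_top1 (m := 1) (f := f) (U := U); norm_num at this; exact this
    have a2 : Av 1 f U 2 = gq f U 2 - U 4 := by
      have := Av_top0 (m := 1) (f := f) (U := U) le_rfl; norm_num at this; exact this
    rw [a1, a2]; ring
  · have a1 : Av m f U 1 = eqf f U 1 - dq f U 1 := by
      have := Av_odd (f := f) (U := U) hm 0 (by omega); norm_num at this; exact this
    have a2 : Av m f U 2 = eqf f U 1 := by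
      have := Av_even (f := f) (U := U) hm 0 (by omega); norm_num at this; exact this
    rw [a1, a2, eqf_one]; ring

lemma Lodd (hm : 1 ≤ m) (s : ℕ) (h : 2*s+3 ≤ 2*m) :
    Av m f U (2*s+2) + Av m f U (2*s+3) + Av m f U (2*s+4) = gq f U (2*s+3) := by
  have a1 : Av m f U (2*s+2) = eqf f U (s+1) := Av_even hm s (by omega)
  by_cases hs : s + 2 ≤ m - 1
  · have a2 : Av m f U (2*s+3) = eqf f U (s+2) - dq f U (s+2) := by
      have := Av_odd (f := f) (U := U) hm (s+1) (by omega)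
      rw [show 2*(s+1)+1 = 2*s+3 by ring] at this; exact this
    have a3 : Av m f U (2*s+4) = eqf f U (s+2) := by
      have := Av_even (f := f) (U := U) hm (s+1) (by omega)
      rw [show 2*(s+1)+2 = 2*s+4 by ring] at this; exact this
    rw [a1, a2, a3, eqf_succ]; ring
  · have hm2 : 2 ≤ m := by omega
    have hsm : s = m - 2 := by omega
    have a2 : Av m f U (2*s+3) = U (2*m+2) := by
      rw [show 2*s+3 = 2*m-1 by omega]; exact Av_top1
    have a3 : Av m f U (2*s+4) = gq f U (2*m-1) - eqf f U (m-1) - U (2*m+2) := by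
      rw [show 2*s+4 = 2*m by omega, Av_top0 hm, if_neg (by omega)]
    rw [a1, a2, a3, show 2*s+3 = 2*m-1 by omega, show s+1 = m-1 by omega]; ring

lemma Leven (hm : 1 ≤ m) (s : ℕ) (h : 2*s+4 ≤ 2*m) :
    Av m f U (2*s+1) + Av m f U (2*s+3) + Av m f U (2*s+4) = gq f U (2*s+4) := by
  have a1 : Av m f U (2*s+1) = eqf f U (s+1) - dq f U (s+1) := Av_odd hm s (by omega)
  by_cases hs : s + 2 ≤ m - 1
  · have a2 : Av m f U (2*s+3) = eqf f U (s+2) - dq f U (s+2) := by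
      have := Av_odd (f := f) (U := U) hm (s+1) (by omega)
      rw [show 2*(s+1)+1 = 2*s+3 by ring] at this; exact this
    have a3 : Av m f U (2*s+4) = eqf f U (s+2) := by
      have := Av_even (f := f) (U := U) hm (s+1) (by omega)
      rw [show 2*(s+1)+2 = 2*s+4 by ring] at this; exact this
    have hd : dq f U (s+1) = gq f U (2*s+3) - gq f U (2*s+4) := by
      unfold dq; rw [show 2*(s+1)+1 = 2*s+3 by ring, show 2*(s+1)+2 = 2*s+4 by ring]
    rw [a1, a2, a3, eqf_succ, hd]; ring
  · have hm2 : 2 ≤ m := by omega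
    have a2 : Av m f U (2*s+3) = U (2*m+2) := by
      rw [show 2*s+3 = 2*m-1 by omega]; exact Av_top1
    have a3 : Av m f U (2*s+4) = gq f U (2*m-1) - eqf f U (m-1) - U (2*m+2) := by
      rw [show 2*s+4 = 2*m by omega, Av_top0 hm, if_neg (by omega)]
    have hd : dq f U (s+1) = gq f U (2*m-1) - gq f U (2*m) := by
      unfold dq; rw [show 2*(s+1)+1 = 2*m-1 by omega, show 2*(s+1)+2 = 2*m by omega]
    rw [a1, a2, a3, hd, show s+1 = m-1 by omega, show 2*s+4 = 2*m by omega]; ring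

lemma gq_two : gq f U 2 = f (y 2) - U 0 - U 1 := by simp [gq]
lemma gq_mod1 {k : ℕ} (h : k % 4 = 1) : gq f U k = f (y k) - U 0 := by
  unfold gq; rw [if_neg (by omega), if_pos h]
lemma gq_mod3 {k : ℕ} (h : k % 4 = 3) : gq f U k = f (y k) - U 2 := by
  unfold gq; rw [if_neg (by omega), if_neg (by omega), if_pos h]
lemma gq_mod2 {k : ℕ} (h : k % 4 = 2) (h2 : k ≠ 2) : gq f U k = f (y k) - U 1 := by
  unfold gq; rw [if_neg h2, if_neg (by omega), if_neg (by omega), if_pos h]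
lemma gq_mod0 {k : ℕ} (h : k % 4 = 0) : gq f U k = f (y k) - C4 f U := by
  unfold gq
  rw [if_neg (by omega), if_neg (by omega), if_neg (by omega), if_neg (by omega)]

noncomputable def usol (m : ℕ) (f : (Fin 4 → ℕ) → ℂ) (U : ℕ → ℂ) : Fin 4 → ℕ → ℂ :=
  fun _ x =>
    if x = 0 then U 0 else if x = 1 then U 1 else if x = 2 then U 2
    else if x = 3 then C4 f U else Av m f U (x - 3)

lemma usol_zero (i : Fin 4) : usol m f U i 0 = U 0 := rfl
lemma usol_one (i : Fin 4) : usol m f U i 1 = U 1 := rfl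
lemma usol_two (i : Fin 4) : usol m f U i 2 = U 2 := rfl
lemma usol_three (i : Fin 4) : usol m f U i 3 = C4 f U := rfl
lemma usol_big (i : Fin 4) (j : ℕ) (h : 1 ≤ j) : usol m f U i (j+3) = Av m f U j := by
  unfold usol
  rw [if_neg (by omega), if_neg (by omega), if_neg (by omega), if_neg (by omega),
    show j+3-3 = j by omega]

lemma mem_Sn {k N : ℕ} (h1 : 1 ≤ k) (h2 : k ≤ N) : y k ∈ Sn N := ⟨k, ⟨h1, h2⟩, rfl⟩

lemma usol_solves (hm : 1 ≤ m) : Solves (Sn (2*m)) f (usol m f U) := by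
  rintro p ⟨k, ⟨h1, h2⟩, rfl⟩
  rw [sum4]
  have qb : ∀ (i : Fin 4) (x j : ℕ), x = j + 3 → 1 ≤ j → usol m f U i x = Av m f U j := by
    intro i x j hx hj; rw [hx]; exact usol_big _ _ hj
  rcases Nat.lt_or_ge k 3 with hk | hk
  · interval_cases k
    · have e : usol m f U 0 (y 1 0) + usol m f U 1 (y 1 1) + usol m f U 2 (y 1 2)
          + usol m f U 3 (y 1 3) = U 0 + U 1 + U 2 + C4 f U := rfl
      rw [e]; unfold C4; try ring
    · have e : usol m f U 0 (y 2 0) + usol m f U 1 (y 2 1) + usol m f U 2 (y 2 2)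
          + usol m f U 3 (y 2 3) = U 0 + U 1 + Av m f U 1 + Av m f U 2 := rfl
      rw [e]
      have hL := L2 (f := f) (U := U) hm
      rw [gq_two] at hL
      linear_combination -hL
  · by_cases h3 : k % 4 = 3
    · obtain ⟨n, rfl⟩ : ∃ n, k = 4*n+3 := ⟨(k-3)/4, by omega⟩
      have hL := Lodd (f := f) (U := U) hm (2*n) (by omega)
      rw [show 2*(2*n)+2 = 4*n+2 by ring, show 2*(2*n)+3 = 4*n+3 by ring,
        show 2*(2*n)+4 = 4*n+4 by ring, gq_mod3 (by omega)] at hL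
      rw [y_shape3] at hL ⊢
      simp only [Matrix.cons_val_zero, Matrix.cons_val_one, Matrix.head_cons,
        Matrix.cons_val_two, Matrix.cons_val_three, Matrix.tail_cons, usol_two]
      rw [qb 0 _ (4*n+3) (by omega) (by omega), qb 1 _ (4*n+4) (by omega) (by omega),
        qb 3 _ (4*n+2) (by omega) (by omega)]
      linear_combination -hL
    · by_cases h0 : k % 4 = 0
      · obtain ⟨n, rfl⟩ : ∃ n, k = 4*n+4 := ⟨(k-4)/4, by omega⟩
        have hL := Leven (f := f) (U := U) hm (2*n) (by omega)
        rw [show 2*(2*n)+1 = 4*n+1 by ring, show 2*(2*n)+3 = 4*n+3 by ring,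
          show 2*(2*n)+4 = 4*n+4 by ring, gq_mod0 (by omega)] at hL
        rw [y_shape0] at hL ⊢
        simp only [Matrix.cons_val_zero, Matrix.cons_val_one, Matrix.head_cons,
          Matrix.cons_val_two, Matrix.cons_val_three, Matrix.tail_cons, usol_three]
        rw [qb 0 _ (4*n+3) (by omega) (by omega), qb 1 _ (4*n+4) (by omega) (by omega),
          qb 2 _ (4*n+1) (by omega) (by omega)]
        linear_combination -hL
      · by_cases hh1 : k % 4 = 1
        · obtain ⟨n, rfl⟩ : ∃ n, k = 4*n+5 := ⟨(k-5)/4, by omega⟩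
          have hL := Lodd (f := f) (U := U) hm (2*n+1) (by omega)
          rw [show 2*(2*n+1)+2 = 4*n+4 by ring, show 2*(2*n+1)+3 = 4*n+5 by ring,
            show 2*(2*n+1)+4 = 4*n+6 by ring, gq_mod1 (by omega)] at hL
          rw [y_shape1] at hL ⊢
          simp only [Matrix.cons_val_zero, Matrix.cons_val_one, Matrix.head_cons,
            Matrix.cons_val_two, Matrix.cons_val_three, Matrix.tail_cons, usol_zero]
          rw [qb 1 _ (4*n+4) (by omega) (by omega), qb 2 _ (4*n+5) (by omega) (by omega),
            qb 3 _ (4*n+6) (by omega) (by omega)]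
          linear_combination -hL
        · obtain ⟨n, rfl⟩ : ∃ n, k = 4*n+6 := ⟨(k-6)/4, by omega⟩
          have hL := Leven (f := f) (U := U) hm (2*n+1) (by omega)
          rw [show 2*(2*n+1)+1 = 4*n+3 by ring, show 2*(2*n+1)+3 = 4*n+5 by ring,
            show 2*(2*n+1)+4 = 4*n+6 by ring, gq_mod2 (by omega) (by omega)] at hL
          rw [y_shape2] at hL ⊢
          simp only [Matrix.cons_val_zero, Matrix.cons_val_one, Matrix.head_cons,
            Matrix.cons_val_two, Matrix.cons_val_three, Matrix.tail_cons, usol_one]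
          rw [qb 0 _ (4*n+3) (by omega) (by omega), qb 2 _ (4*n+5) (by omega) (by omega),
            qb 3 _ (4*n+6) (by omega) (by omega)]
          linear_combination -hL

noncomputable def Wd (u v : Fin 4 → ℕ → ℂ) (j : ℕ) : ℂ := u (Wi j) (j+3) - v (Wi j) (j+3)

lemma Wd1 {u v : Fin 4 → ℕ → ℂ} {j : ℕ} (h : j % 4 = 1) :
    Wd u v j = u 2 (j+3) - v 2 (j+3) := by unfold Wd; rw [Wi1 h]
lemma Wd2 {u v : Fin 4 → ℕ → ℂ} {j : ℕ} (h : j % 4 = 2) :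
    Wd u v j = u 3 (j+3) - v 3 (j+3) := by unfold Wd; rw [Wi2 h]
lemma Wd3 {u v : Fin 4 → ℕ → ℂ} {j : ℕ} (h : j % 4 = 3) :
    Wd u v j = u 0 (j+3) - v 0 (j+3) := by unfold Wd; rw [Wi3 h]
lemma Wd0 {u v : Fin 4 → ℕ → ℂ} {j : ℕ} (h : j % 4 = 0) :
    Wd u v j = u 1 (j+3) - v 1 (j+3) := by unfold Wd; rw [Wi0 h]

lemma top_proj (m : ℕ) (hm : 1 ≤ m) : (2*m+2 : ℕ) ∈ proj (Sn (2*m)) (Wi (2*m-1)) := by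
  by_cases h1 : m = 1
  · subst h1
    rw [show 2*1-1 = 1 by norm_num, Wi1 (by norm_num)]
    refine ⟨y 2, mem_Sn (by norm_num) (by norm_num), ?_⟩
    show y 2 2 = 2*1+2
    rw [y_two]; rfl
  · rcases Nat.even_or_odd m with he | ho
    · obtain ⟨t, ht⟩ := he
      have hn : 2*m-1 = 4*(t-1)+3 := by omega
      rw [hn, Wi3 (by omega)]
      refine ⟨y (4*(t-1)+3), mem_Sn (by omega) (by omega), ?_⟩
      show y (4*(t-1)+3) 0 = 2*m+2
      rw [y_shape3]
      show 4*(t-1)+6 = 2*m+2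
      omega
    · obtain ⟨t, ht⟩ := ho
      have hn : 2*m-1 = 4*(t-1)+5 := by omega
      rw [hn, Wi1 (by omega)]
      refine ⟨y (4*(t-1)+5), mem_Sn (by omega) (by omega), ?_⟩
      show y (4*(t-1)+5) 2 = 2*m+2
      rw [y_shape1]
      show 4*(t-1)+8 = 2*m+2
      omega

lemma Bsub (m : ℕ) (hm : 1 ≤ m) :
    ({0, 1, 2, α (2*m-1)} : Set ℕ) ⊆ ⋃ i, proj (Sn (2*m)) i := by
  intro a ha
  simp only [Set.mem_insert_iff, Set.mem_singleton_iff] at ha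
  rcases ha with rfl | rfl | rfl | rfl
  · exact Set.mem_iUnion.2 ⟨0, ⟨y 1, mem_Sn le_rfl (by omega), rfl⟩⟩
  · exact Set.mem_iUnion.2 ⟨1, ⟨y 1, mem_Sn le_rfl (by omega), rfl⟩⟩
  · exact Set.mem_iUnion.2 ⟨2, ⟨y 1, mem_Sn le_rfl (by omega), rfl⟩⟩
  · rw [show α (2*m-1) = 2*m+2 by simp [α]; omega]
    exact Set.mem_iUnion.2 ⟨_, top_proj m hm⟩

lemma usol_bdry (hm : 1 ≤ m) :
    ∀ i, ∀ a ∈ ({0, 1, 2, α (2*m-1)} : Set ℕ) ∩ proj (Sn (2*m)) i,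
      usol m f U i a = U a := by
  rintro i a ⟨hB, -⟩
  simp only [Set.mem_insert_iff, Set.mem_singleton_iff] at hB
  have hα : α (2*m-1) = 2*m+2 := by simp [α]; omega
  rcases hB with rfl | rfl | rfl | rfl
  · rfl
  · rfl
  · rfl
  · rw [hα, show (2*m+2 : ℕ) = (2*m-1)+3 by omega, usol_big _ _ (by omega), Av_top1]
    congr 1
    omega

lemma uniq (m : ℕ) (hm : 1 ≤ m) (f : (Fin 4 → ℕ) → ℂ) (U : ℕ → ℂ)
    (u v : Fin 4 → ℕ → ℂ)
    (hu : Solves (Sn (2*m)) f u)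
    (hbu : ∀ i, ∀ a ∈ ({0, 1, 2, α (2*m-1)} : Set ℕ) ∩ proj (Sn (2*m)) i, u i a = U a)
    (hv : Solves (Sn (2*m)) f v)
    (hbv : ∀ i, ∀ a ∈ ({0, 1, 2, α (2*m-1)} : Set ℕ) ∩ proj (Sn (2*m)) i, v i a = U a) :
    ∀ i, ∀ a ∈ proj (Sn (2*m)) i, u i a = v i a := by
  have Hs : ∀ k, 1 ≤ k → k ≤ 2*m → ∑ i, u i (y k i) = ∑ i, v i (y k i) := by
    intro k hk1 hk2
    rw [← hu _ (mem_Sn hk1 hk2), ← hv _ (mem_Sn hk1 hk2)]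
  have p0 : (0:ℕ) ∈ ({0, 1, 2, α (2*m-1)} : Set ℕ) ∩ proj (Sn (2*m)) 0 :=
    ⟨by simp, ⟨y 1, mem_Sn le_rfl (by omega), rfl⟩⟩
  have p1 : (1:ℕ) ∈ ({0, 1, 2, α (2*m-1)} : Set ℕ) ∩ proj (Sn (2*m)) 1 :=
    ⟨by simp, ⟨y 1, mem_Sn le_rfl (by omega), rfl⟩⟩
  have p2 : (2:ℕ) ∈ ({0, 1, 2, α (2*m-1)} : Set ℕ) ∩ proj (Sn (2*m)) 2 :=
    ⟨by simp, ⟨y 1, mem_Sn le_rfl (by omega), rfl⟩⟩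
  have h00 : u 0 0 = v 0 0 := by rw [hbu 0 0 p0, hbv 0 0 p0]
  have h11 : u 1 1 = v 1 1 := by rw [hbu 1 1 p1, hbv 1 1 p1]
  have h22 : u 2 2 = v 2 2 := by rw [hbu 2 2 p2, hbv 2 2 p2]
  have h33 : u 3 3 = v 3 3 := by
    have h := Hs 1 le_rfl (by omega)
    rw [sum4, sum4, show y 1 0 = 0 from rfl, show y 1 1 = 1 from rfl,
      show y 1 2 = 2 from rfl, show y 1 3 = 3 from rfl] at h
    linear_combination h - h00 - h11 - h22
  have D3 : ∀ n, 4*n+3 ≤ 2*m → (u 3 (4*n+5) - v 3 (4*n+5)) + (u 0 (4*n+6) - v 0 (4*n+6))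
      + (u 1 (4*n+7) - v 1 (4*n+7)) = 0 := by
    intro n h
    have h5 := Hs (4*n+3) (by omega) h
    rw [sum4, sum4, y_shape3] at h5
    simp only [Matrix.cons_val_zero, Matrix.cons_val_one, Matrix.head_cons,
      Matrix.cons_val_two, Matrix.cons_val_three, Matrix.tail_cons] at h5
    linear_combination h5 - h22
  have D0 : ∀ n, 4*n+4 ≤ 2*m → (u 2 (4*n+4) - v 2 (4*n+4)) + (u 0 (4*n+6) - v 0 (4*n+6))
      + (u 1 (4*n+7) - v 1 (4*n+7)) = 0 := by
    intro n h
    have h5 := Hs (4*n+4) (by omega) h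
    rw [sum4, sum4, y_shape0] at h5
    simp only [Matrix.cons_val_zero, Matrix.cons_val_one, Matrix.head_cons,
      Matrix.cons_val_two, Matrix.cons_val_three, Matrix.tail_cons] at h5
    linear_combination h5 - h33
  have D1 : ∀ n, 4*n+5 ≤ 2*m → (u 1 (4*n+7) - v 1 (4*n+7)) + (u 2 (4*n+8) - v 2 (4*n+8))
      + (u 3 (4*n+9) - v 3 (4*n+9)) = 0 := by
    intro n h
    have h5 := Hs (4*n+5) (by omega) h
    rw [sum4, sum4, y_shape1] at h5
    simp only [Matrix.cons_val_zero, Matrix.cons_val_one, Matrix.head_cons,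
      Matrix.cons_val_two, Matrix.cons_val_three, Matrix.tail_cons] at h5
    linear_combination h5 - h00
  have D2 : ∀ n, 4*n+6 ≤ 2*m → (u 0 (4*n+6) - v 0 (4*n+6)) + (u 2 (4*n+8) - v 2 (4*n+8))
      + (u 3 (4*n+9) - v 3 (4*n+9)) = 0 := by
    intro n h
    have h5 := Hs (4*n+6) (by omega) h
    rw [sum4, sum4, y_shape2] at h5
    simp only [Matrix.cons_val_zero, Matrix.cons_val_one, Matrix.head_cons,
      Matrix.cons_val_two, Matrix.cons_val_three, Matrix.tail_cons] at h5
    linear_combination h5 - h11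
  have H2 : Wd u v 1 + Wd u v 2 = 0 := by
    have h5 := Hs 2 (by omega) (by omega)
    rw [sum4, sum4, show y 2 0 = 0 from rfl, show y 2 1 = 1 from rfl,
      show y 2 2 = 4 from rfl, show y 2 3 = 5 from rfl] at h5
    rw [Wd1 (by norm_num), Wd2 (by norm_num), show (1:ℕ)+3 = 4 by norm_num,
      show (2:ℕ)+3 = 5 by norm_num]
    linear_combination h5 - h00 - h11
  have HO : ∀ j, 1 ≤ j → j % 2 = 0 → j+2 ≤ 2*m →
      Wd u v j + Wd u v (j+1) + Wd u v (j+2) = 0 := by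
    intro j hj1 hj2 hj3
    by_cases h4 : j % 4 = 2
    · obtain ⟨n, rfl⟩ : ∃ n, j = 4*n+2 := ⟨(j-2)/4, by omega⟩
      rw [Wd2 (by omega), Wd3 (by omega), Wd0 (by omega),
        show 4*n+2+1+3 = 4*n+6 by omega, show 4*n+2+2+3 = 4*n+7 by omega,
        show 4*n+2+3 = 4*n+5 by omega]
      exact D3 n (by omega)
    · obtain ⟨n, rfl⟩ : ∃ n, j = 4*n+4 := ⟨(j-4)/4, by omega⟩
      rw [Wd0 (by omega), Wd1 (by omega), Wd2 (by omega),
        show 4*n+4+1+3 = 4*n+8 by omega, show 4*n+4+2+3 = 4*n+9 by omega,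
        show 4*n+4+3 = 4*n+7 by omega]
      exact D1 n (by omega)
  have HE : ∀ j, j % 2 = 1 → j+3 ≤ 2*m →
      Wd u v j + Wd u v (j+2) + Wd u v (j+3) = 0 := by
    intro j hj2 hj3
    by_cases h4 : j % 4 = 1
    · obtain ⟨n, rfl⟩ : ∃ n, j = 4*n+1 := ⟨(j-1)/4, by omega⟩
      rw [Wd1 (by omega), Wd3 (by omega), Wd0 (by omega),
        show 4*n+1+3+3 = 4*n+7 by omega, show 4*n+1+2+3 = 4*n+6 by omega,
        show 4*n+1+3 = 4*n+4 by omega]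
      exact D0 n (by omega)
    · obtain ⟨n, rfl⟩ : ∃ n, j = 4*n+3 := ⟨(j-3)/4, by omega⟩
      rw [Wd3 (by omega), Wd1 (by omega), Wd2 (by omega),
        show 4*n+3+3+3 = 4*n+9 by omega, show 4*n+3+2+3 = 4*n+8 by omega,
        show 4*n+3+3 = 4*n+6 by omega]
      exact D2 n (by omega)
  have E : ∀ s, 2*s+4 ≤ 2*m → Wd u v (2*s+2) = Wd u v (2*s+1) := by
    intro s h
    have h1 := HO (2*s+2) (by omega) (by omega) (by omega)
    have h2 := HE (2*s+1) (by omega) (by omega)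
    rw [show 2*s+2+1 = 2*s+3 by omega, show 2*s+2+2 = 2*s+4 by omega] at h1
    rw [show 2*s+1+2 = 2*s+3 by omega, show 2*s+1+3 = 2*s+4 by omega] at h2
    linear_combination h1 - h2
  have P : ∀ s, 2*s+4 ≤ 2*m → Wd u v (2*s+1) = 0 ∧ Wd u v (2*s+2) = 0 := by
    intro s
    induction s with
    | zero =>
      intro h
      have e0 := E 0 (by omega)
      norm_num at e0 ⊢
      constructor
      · linear_combination (H2 - e0)/2
      · linear_combination (H2 + e0)/2
    | succ s ih =>
      intro h
      have hprev : Wd u v (2*s+2) = 0 := (ih (by omega)).2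
      have h1 := HO (2*s+2) (by omega) (by omega) (by omega)
      rw [show 2*s+2+1 = 2*s+3 by omega, show 2*s+2+2 = 2*s+4 by omega] at h1
      have e1 := E (s+1) (by omega)
      rw [show 2*(s+1)+2 = 2*s+4 by omega, show 2*(s+1)+1 = 2*s+3 by omega] at e1
      rw [show 2*(s+1)+1 = 2*s+3 by omega, show 2*(s+1)+2 = 2*s+4 by omega]
      constructor
      · linear_combination (h1 - hprev - e1)/2
      · linear_combination (h1 - hprev + e1)/2
  have WB : Wd u v (2*m-1) = 0 := by
    have hBm : (2*m+2 : ℕ) ∈ ({0, 1, 2, α (2*m-1)} : Set ℕ) := by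
      simp only [Set.mem_insert_iff, Set.mem_singleton_iff, α]; omega
    have hP := top_proj m hm
    have e1 := hbu (Wi (2*m-1)) (2*m+2) ⟨hBm, hP⟩
    have e2 := hbv (Wi (2*m-1)) (2*m+2) ⟨hBm, hP⟩
    unfold Wd
    rw [show 2*m-1+3 = 2*m+2 by omega, e1, e2, sub_self]
  have Wlast : Wd u v (2*m) = 0 := by
    by_cases h1 : m = 1
    · subst h1
      have wb := WB
      norm_num at wb ⊢
      linear_combination H2 - wb
    · have h1' := HO (2*m-2) (by omega) (by omega) (by omega)
      rw [show 2*m-2+1 = 2*m-1 by omega, show 2*m-2+2 = 2*m by omega] at h1'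
      have hp := (P (m-2) (by omega)).2
      rw [show 2*(m-2)+2 = 2*m-2 by omega] at hp
      linear_combination h1' - hp - WB
  have key : ∀ j, 1 ≤ j → j ≤ 2*m → Wd u v j = 0 := by
    intro j hj1 hj2
    rcases Nat.lt_or_ge j (2*m-1) with h | h
    · by_cases hpar : j % 2 = 1
      · obtain ⟨s, rfl⟩ : ∃ s, j = 2*s+1 := ⟨(j-1)/2, by omega⟩
        exact (P s (by omega)).1
      · obtain ⟨s, rfl⟩ : ∃ s, j = 2*s+2 := ⟨(j-2)/2, by omega⟩
        exact (P s (by omega)).2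
    · rcases (by omega : j = 2*m-1 ∨ j = 2*m) with rfl | rfl
      · exact WB
      · exact Wlast
  have K0 : ∀ j, j % 4 = 3 → 1 ≤ j → j ≤ 2*m → u 0 (j+3) = v 0 (j+3) := by
    intro j h hj1 hj2
    have hk := key j hj1 hj2
    rw [Wd3 h] at hk
    exact sub_eq_zero.mp hk
  have K1 : ∀ j, j % 4 = 0 → 1 ≤ j → j ≤ 2*m → u 1 (j+3) = v 1 (j+3) := by
    intro j h hj1 hj2
    have hk := key j hj1 hj2
    rw [Wd0 h] at hk
    exact sub_eq_zero.mp hk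
  have K2 : ∀ j, j % 4 = 1 → 1 ≤ j → j ≤ 2*m → u 2 (j+3) = v 2 (j+3) := by
    intro j h hj1 hj2
    have hk := key j hj1 hj2
    rw [Wd1 h] at hk
    exact sub_eq_zero.mp hk
  have K3 : ∀ j, j % 4 = 2 → 1 ≤ j → j ≤ 2*m → u 3 (j+3) = v 3 (j+3) := by
    intro j h hj1 hj2
    have hk := key j hj1 hj2
    rw [Wd2 h] at hk
    exact sub_eq_zero.mp hk
  rintro i a ⟨p, ⟨k, ⟨hk1, hk2⟩, rfl⟩, rfl⟩
  show u i (y k i) = v i (y k i)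
  rcases Nat.lt_or_ge k 3 with hk | hk
  · interval_cases k
    · fin_cases i
      · exact h00
      · exact h11
      · exact h22
      · exact h33
    · fin_cases i
      · exact h00
      · exact h11
      · show u 2 4 = v 2 4
        have := K2 1 rfl (by omega) (by omega)
        norm_num at this
        exact this
      · show u 3 5 = v 3 5
        have := K3 2 rfl (by omega) (by omega)
        norm_num at this
        exact this
  · by_cases h3 : k % 4 = 3
    · obtain ⟨n, rfl⟩ : ∃ n, k = 4*n+3 := ⟨(k-3)/4, by omega⟩
      rw [y_shape3]
      fin_cases i
      · show u 0 (4*n+6) = v 0 (4*n+6)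
        have := K0 (4*n+3) (by omega) (by omega) (by omega)
        rwa [show 4*n+3+3 = 4*n+6 by omega] at this
      · show u 1 (4*n+7) = v 1 (4*n+7)
        have := K1 (4*n+4) (by omega) (by omega) (by omega)
        rwa [show 4*n+4+3 = 4*n+7 by omega] at this
      · exact h22
      · show u 3 (4*n+5) = v 3 (4*n+5)
        have := K3 (4*n+2) (by omega) (by omega) (by omega)
        rwa [show 4*n+2+3 = 4*n+5 by omega] at this
    · by_cases h0 : k % 4 = 0
      · obtain ⟨n, rfl⟩ : ∃ n, k = 4*n+4 := ⟨(k-4)/4, by omega⟩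
        rw [y_shape0]
        fin_cases i
        · show u 0 (4*n+6) = v 0 (4*n+6)
          have := K0 (4*n+3) (by omega) (by omega) (by omega)
          rwa [show 4*n+3+3 = 4*n+6 by omega] at this
        · show u 1 (4*n+7) = v 1 (4*n+7)
          have := K1 (4*n+4) (by omega) (by omega) (by omega)
          rwa [show 4*n+4+3 = 4*n+7 by omega] at this
        · show u 2 (4*n+4) = v 2 (4*n+4)
          have := K2 (4*n+1) (by omega) (by omega) (by omega)
          rwa [show 4*n+1+3 = 4*n+4 by omega] at this
        · exact h33
      · by_cases hh1 : k % 4 = 1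
        · obtain ⟨n, rfl⟩ : ∃ n, k = 4*n+5 := ⟨(k-5)/4, by omega⟩
          rw [y_shape1]
          fin_cases i
          · exact h00
          · show u 1 (4*n+7) = v 1 (4*n+7)
            have := K1 (4*n+4) (by omega) (by omega) (by omega)
            rwa [show 4*n+4+3 = 4*n+7 by omega] at this
          · show u 2 (4*n+8) = v 2 (4*n+8)
            have := K2 (4*n+5) (by omega) (by omega) (by omega)
            rwa [show 4*n+5+3 = 4*n+8 by omega] at this
          · show u 3 (4*n+9) = v 3 (4*n+9)
            have := K3 (4*n+6) (by omega) (by omega) (by omega)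
            rwa [show 4*n+6+3 = 4*n+9 by omega] at this
        · obtain ⟨n, rfl⟩ : ∃ n, k = 4*n+6 := ⟨(k-6)/4, by omega⟩
          rw [y_shape2]
          fin_cases i
          · show u 0 (4*n+6) = v 0 (4*n+6)
            have := K0 (4*n+3) (by omega) (by omega) (by omega)
            rwa [show 4*n+3+3 = 4*n+6 by omega] at this
          · exact h11
          · show u 2 (4*n+8) = v 2 (4*n+8)
            have := K2 (4*n+5) (by omega) (by omega) (by omega)
            rwa [show 4*n+5+3 = 4*n+8 by omega] at this
          · show u 3 (4*n+9) = v 3 (4*n+9)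
            have := K3 (4*n+6) (by omega) (by omega) (by omega)
            rwa [show 4*n+6+3 = 4*n+9 by omega] at this

/-- {x₁,x₂,x₃,α_{2m−1}} is also a boundary of the good set S_{2m}. -/
theorem stmt_6 (m : ℕ) (hm : 1 ≤ m) :
    IsGood (Sn (2 * m)) ∧ IsBoundary (Sn (2 * m)) {0, 1, 2, α (2 * m - 1)} := by
  constructor
  · intro f
    exact ⟨usol m f (fun _ => 0), usol_solves hm⟩
  · refine ⟨Bsub m hm, fun f U => ⟨⟨usol m f U, usol_solves hm, usol_bdry hm⟩, ?_⟩⟩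
    intro u v hu hbu hv hbv
    exact uniq m hm f U u v hu hbu hv hbv
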